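/- arXiv:2502.04179 — 4 statements merged into one kernel-verified Lean document; each statement's English description precedes it below -/
import Mathlib

section
/- For real numbers c > 0 and d, let f(θ) = c²θ² + c(d−2)θ + (c−d) and g(θ) = cθ² + dθ + 1 over ℂ. Then f and g have a common root in ℂ if and only if d² − 4c = 0, i.e., if and only if g has a double root. -/
open Polynomial

theorem stmt1 (c d : ℝ) (hc : 0 < c)
    (f g : Polynomial ℂ)
    (hf : f = C ((c : ℂ)^2) * X^2 + C ((c : ℂ) * ((d : ℂ) - 2)) * X + C ((c : ℂ) - (d : ℂ)))
    (hg : g = C (c : ℂ) * X^2 + C (d : ℂ) * X + C 1) :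
    ((∃ α : ℂ, f.IsRoot α ∧ g.IsRoot α) ↔ d^2 - 4*c = 0) ∧
    ((∃ α : ℂ, f.IsRoot α ∧ g.IsRoot α) ↔ ∃ α : ℂ, g.rootMultiplicity α = 2) := by
  have hcC : (c : ℂ) ≠ 0 := by exact_mod_cast hc.ne'
  have hg0 : g ≠ 0 := by
    intro h
    have h1 : g.eval 0 = 1 := by simp [hg]
    rw [h] at h1
    simp at h1
  -- First iff
  have main : (∃ α : ℂ, f.IsRoot α ∧ g.IsRoot α) ↔ d^2 - 4*c = 0 := by
    constructor
    · rintro ⟨α, hfα, hgα⟩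
      simp only [hf, hg, IsRoot, eval_add, eval_mul, eval_pow, eval_C, eval_X] at hfα hgα
      have h0 : ((d^2 - 4*c : ℝ) : ℂ) = 0 := by
        push_cast
        linear_combination ((c:ℂ)*d + 2*c^2*α - 4*c) * hgα + (-(d:ℂ) - 2*c*α) * hfα
      exact_mod_cast h0
    · intro hd
      have hdC : ((d:ℂ))^2 = 4*(c:ℂ) := by
        have h1 : ((d^2 : ℝ) : ℂ) = ((4*c : ℝ) : ℂ) := by norm_cast; linarith
        push_cast at h1; exact h1
      refine ⟨-(d:ℂ)/(2*c), ?_, ?_⟩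
      · simp only [hf, IsRoot, eval_add, eval_mul, eval_pow, eval_C, eval_X]
        field_simp
        linear_combination (-1:ℂ) * hdC
      · simp only [hg, IsRoot, eval_add, eval_mul, eval_pow, eval_C, eval_X]
        field_simp
        linear_combination (-1:ℂ) * hdC
  -- Second iff: discriminant zero ↔ double root
  have second : (d^2 - 4*c = 0) ↔ ∃ α : ℂ, g.rootMultiplicity α = 2 := by
    constructor
    · intro hd
      have hdC : ((d:ℂ))^2 = 4*(c:ℂ) := by
        have h1 : ((d^2 : ℝ) : ℂ) = ((4*c : ℝ) : ℂ) := by norm_cast; linarith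
        push_cast at h1; exact h1
      set α₀ : ℂ := -(d:ℂ)/(2*c) with hα₀
      have hgfac : g = C (c:ℂ) * (X - C α₀) ^ 2 := by
        apply Polynomial.funext
        intro x
        simp only [hg, hα₀, eval_add, eval_mul, eval_pow, eval_sub, eval_C, eval_X]
        field_simp
        linear_combination (-1:ℂ) * hdC
      refine ⟨α₀, ?_⟩
      rw [hgfac]
      have hne : C (c:ℂ) * (X - C α₀) ^ 2 ≠ 0 := by rw [← hgfac]; exact hg0
      rw [rootMultiplicity_mul hne, rootMultiplicity_C, rootMultiplicity_X_sub_C_pow]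
    · rintro ⟨α, hm⟩
      have hdvd : (X - C α) ^ 2 ∣ g := by
        have := Polynomial.pow_rootMultiplicity_dvd g α
        rwa [hm] at this
      obtain ⟨q, hq⟩ := hdvd
      have hgα : g.eval α = 0 := by rw [hq]; simp
      have hgα' : (derivative g).eval α = 0 := by
        rw [hq]
        simp [derivative_mul, derivative_pow]
      simp only [hg, eval_add, eval_mul, eval_pow, eval_C, eval_X] at hgα
      rw [hg] at hgα'
      simp only [derivative_add, derivative_mul, derivative_pow, derivative_C, derivative_X,
        eval_add, eval_mul, eval_pow, eval_C, eval_X, eval_zero, eval_one] at hgα'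
      norm_num at hgα'
      have h0 : ((d^2 - 4*c : ℝ) : ℂ) = 0 := by
        push_cast
        linear_combination ((d:ℂ) + 2*c*α) * hgα' + (-4*(c:ℂ)) * hgα
      exact_mod_cast h0
  exact ⟨main, main.trans second⟩
end

section
/- Let n ≥ 4 and let g₁,…,gₙ be monic quadratic polynomials over ℂ, pairwise distinct as root-multisets (no two gᵢ have the same pair of roots), such that every pair (gᵢ, gⱼ) with i ≠ j has a common root. Then there exists a unique α ∈ ℂ that is a root of every gᵢ. -/
open Polynomial

theorem stmt8 (n : ℕ) (hn : 4 ≤ n) (g : Fin n → Polynomial ℂ)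
    (hmonic : ∀ i, (g i).Monic) (hdeg : ∀ i, (g i).degree = 2)
    (hdistinct : ∀ i j, i ≠ j → (g i).roots ≠ (g j).roots)
    (hcommon : ∀ i j, i ≠ j → ∃ α : ℂ, (g i).IsRoot α ∧ (g j).IsRoot α) :
    ∃! α : ℂ, ∀ i, (g i).IsRoot α := by
  have hne0 : ∀ i, g i ≠ 0 := fun i => (hmonic i).ne_zero
  have hcard : ∀ i, (g i).roots.card = 2 := by
    intro i
    have hs := Polynomial.splits_iff_card_roots.mp (IsAlgClosed.splits (g i))
    rw [hs, Polynomial.natDegree_eq_of_degree_eq_some (hdeg i)]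
  have hmem : ∀ (i : Fin n) (a : ℂ), (g i).IsRoot a → a ∈ (g i).roots := by
    intro i a ha
    exact Polynomial.mem_roots'.mpr ⟨hne0 i, ha⟩
  have hpair : ∀ (i : Fin n) (a b : ℂ), (g i).IsRoot a → (g i).IsRoot b → a ≠ b →
      (g i).roots = {a, b} := by
    intro i a b ha hb hab
    have ha' := hmem i a ha
    have hb' := hmem i b hb
    obtain ⟨x, y, hxy⟩ := Multiset.card_eq_two.mp (hcard i)
    rw [hxy] at ha' hb' ⊢
    simp only [Multiset.insert_eq_cons, Multiset.mem_cons, Multiset.mem_singleton] at ha' hb'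
    have hsw : (x ::ₘ {y} : Multiset ℂ) = y ::ₘ {x} := Multiset.cons_swap x y 0
    rcases ha' with rfl | rfl <;> rcases hb' with h | h <;> subst h <;>
      simp_all
  set i0 : Fin n := ⟨0, by omega⟩ with hi0
  set i1 : Fin n := ⟨1, by omega⟩ with hi1
  have h01 : i0 ≠ i1 := by simp [hi0, hi1, Fin.ext_iff]
  have hex : ∃ α : ℂ, ∀ i, (g i).IsRoot α := by
    by_contra hno
    push_neg at hno
    obtain ⟨α, hα0, hα1⟩ := hcommon i0 i1 h01
    obtain ⟨k, hk⟩ := hno α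
    have hk0 : k ≠ i0 := by rintro rfl; exact hk hα0
    have hk1 : k ≠ i1 := by rintro rfl; exact hk hα1
    obtain ⟨β, hβk, hβ0⟩ := hcommon k i0 hk0
    obtain ⟨γ, hγk, hγ1⟩ := hcommon k i1 hk1
    have hβα : β ≠ α := by rintro rfl; exact hk hβk
    have hγα : γ ≠ α := by rintro rfl; exact hk hγk
    have hβγ : β ≠ γ := by
      rintro rfl
      exact hdistinct i0 i1 h01
        ((hpair i0 α β hα0 hβ0 hβα.symm).trans (hpair i1 α β hα1 hγ1 hβα.symm).symm)
    have r0 : (g i0).roots = {α, β} := hpair i0 α β hα0 hβ0 hβα.symm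
    have r1 : (g i1).roots = {α, γ} := hpair i1 α γ hα1 hγ1 hγα.symm
    have rk : (g k).roots = {β, γ} := hpair k β γ hβk hγk hβγ
    obtain ⟨m, hm0, hm1, hmk⟩ : ∃ m : Fin n, m ≠ i0 ∧ m ≠ i1 ∧ m ≠ k := by
      have hlt : ({i0, i1, k} : Finset (Fin n)).card < Fintype.card (Fin n) := by
        have h3 : ({i0, i1, k} : Finset (Fin n)).card ≤ 3 := by
          apply le_trans (Finset.card_insert_le _ _)
          have := Finset.card_insert_le i1 ({k} : Finset (Fin n))
          simp at this ⊢
          omega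
        simp only [Fintype.card_fin]
        omega
      have hne : (({i0, i1, k} : Finset (Fin n))ᶜ).Nonempty := by
        rw [← Finset.card_pos, Finset.card_compl]
        omega
      obtain ⟨m, hm⟩ := hne
      simp only [Finset.mem_compl, Finset.mem_insert, Finset.mem_singleton, not_or] at hm
      exact ⟨m, hm.1, hm.2.1, hm.2.2⟩
    obtain ⟨δ, hδm, hδ0⟩ := hcommon m i0 hm0
    obtain ⟨ε, hεm, hε1⟩ := hcommon m i1 hm1
    by_cases hαm : (g m).IsRoot α
    · obtain ⟨ζ, hζm, hζk⟩ := hcommon m k hmk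
      have hζ : ζ = β ∨ ζ = γ := by
        have := hmem k ζ hζk
        rw [rk] at this
        simpa [Multiset.insert_eq_cons] using this
      have hζα : ζ ≠ α := by rintro rfl; exact hk hζk
      rcases hζ with rfl | rfl
      · exact hdistinct m i0 hm0 ((hpair m α ζ hαm hζm hζα.symm).trans r0.symm)
      · exact hdistinct m i1 hm1 ((hpair m α ζ hαm hζm hζα.symm).trans r1.symm)
    · have hδ : δ = β := by
        have := hmem i0 δ hδ0
        rw [r0] at this
        simp only [Multiset.insert_eq_cons, Multiset.mem_cons, Multiset.mem_singleton] at this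
        rcases this with rfl | h
        · exact absurd hδm hαm
        · exact h
      have hε : ε = γ := by
        have := hmem i1 ε hε1
        rw [r1] at this
        simp only [Multiset.insert_eq_cons, Multiset.mem_cons, Multiset.mem_singleton] at this
        rcases this with rfl | h
        · exact absurd hεm hαm
        · exact h
      subst hδ hε
      exact hdistinct m k hmk ((hpair m δ ε hδm hεm hβγ).trans rk.symm)
  obtain ⟨α, hα⟩ := hex
  refine ⟨α, hα, ?_⟩
  intro β hβ
  by_contra hne
  exact hdistinct i0 i1 h01
    ((hpair i0 β α (hβ i0) (hα i0) hne).trans (hpair i1 β α (hβ i1) (hα i1) hne).symm)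
end

section
/- Let g₁,…,gₙ be quadratic polynomials over ℂ such that no two distinct gᵢ, gⱼ share a root, let gₖ have a double root α, let fₖ be a quadratic with fₖ(α) = 0 whose other root βₖ ≠ α, and let fᵢ (i ≠ k) be polynomials with fᵢ(α) ≠ 0. Then α is a root of f = Σᵢ (fᵢ · Πⱼ≠ᵢ gⱼ) with multiplicity exactly one. -/
open Polynomial Finset

theorem stmt11 (n : ℕ) (hn : 1 ≤ n) (f g : Fin n → Polynomial ℂ)
    (hgdeg : ∀ i, (g i).degree = 2)
    (hdisj : ∀ i j, i ≠ j → ¬∃ β : ℂ, (g i).IsRoot β ∧ (g j).IsRoot β)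
    (k : Fin n) (α : ℂ) (c : ℂ) (hc : c ≠ 0)
    (hgk : g k = C c * (X - C α)^2)
    (hgα : ∀ i, i ≠ k → (g i).eval α ≠ 0)
    (c' βₖ : ℂ) (hc' : c' ≠ 0) (hβ : βₖ ≠ α)
    (hfk : f k = C c' * (X - C α) * (X - C βₖ))
    (hfα : ∀ i, i ≠ k → (f i).eval α ≠ 0)
    (F : Polynomial ℂ)
    (hF : F = ∑ i, f i * ∏ j ∈ univ.erase i, g j) :
    F.rootMultiplicity α = 1 := by
  set T : Polynomial ℂ := ∑ i ∈ univ.erase k, f i * ∏ j ∈ univ.erase i, g j with hT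
  have hsplit : F = f k * ∏ j ∈ univ.erase k, g j + T := by
    rw [hF, hT, ← Finset.add_sum_erase _ _ (Finset.mem_univ k)]
  have hTdvd : (X - C α) ^ 2 ∣ T := by
    apply Finset.dvd_sum
    intro i hi
    apply dvd_mul_of_dvd_right
    have hk : k ∈ univ.erase i := by
      simp [Finset.mem_erase, (Finset.ne_of_mem_erase hi).symm]
    calc (X - C α) ^ 2 ∣ g k := by rw [hgk]; exact Dvd.intro_left _ rfl
      _ ∣ _ := Finset.dvd_prod_of_mem _ hk
  have hpne : eval α (C c' * (X - C βₖ) * ∏ j ∈ univ.erase k, g j) ≠ 0 := by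
    simp only [eval_mul, eval_C, eval_sub, eval_X, eval_prod]
    refine mul_ne_zero (mul_ne_zero hc' (sub_ne_zero.mpr (Ne.symm hβ))) ?_
    exact Finset.prod_ne_zero_iff.mpr fun j hj => hgα j (Finset.ne_of_mem_erase hj)
  have hfac : f k * ∏ j ∈ univ.erase k, g j
      = (X - C α) * (C c' * (X - C βₖ) * ∏ j ∈ univ.erase k, g j) := by
    rw [hfk]; ring
  have hnot2 : ¬ (X - C α) ^ 2 ∣ F := by
    intro h
    have h2 : (X - C α) ^ 2 ∣ f k * ∏ j ∈ univ.erase k, g j := by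
      have : f k * ∏ j ∈ univ.erase k, g j = F - T := by rw [hsplit]; ring
      rw [this]; exact dvd_sub h hTdvd
    rw [hfac, sq] at h2
    have hX : (X - C α : Polynomial ℂ) ≠ 0 := X_sub_C_ne_zero α
    have h3 : (X - C α) ∣ C c' * (X - C βₖ) * ∏ j ∈ univ.erase k, g j :=
      (mul_dvd_mul_iff_left hX).mp h2
    exact hpne (dvd_iff_isRoot.mp h3)
  have hF0 : F ≠ 0 := fun h => hnot2 (h ▸ dvd_zero _)
  have hdvd1 : (X - C α) ∣ F := by
    rw [hsplit]
    exact dvd_add (hfac ▸ Dvd.intro _ rfl) (dvd_trans (dvd_pow_self _ two_ne_zero) hTdvd)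
  refine le_antisymm ?_ ?_
  · have := (rootMultiplicity_le_iff hF0 α 1).mpr (by simpa using hnot2)
    exact this
  · rw [le_rootMultiplicity_iff hF0]
    simpa using hdvd1
end

section
/- For data points (xᵢ,yᵢ) with cᵢ = xᵢyᵢ > 0, the polynomial f(θ) = Σᵢ₌₁ⁿ fᵢ(θ) Πⱼ≠ᵢ gⱼ(θ), with fᵢ(θ) = cᵢ²θ² + cᵢ(dᵢ−2)θ + (cᵢ−dᵢ) and gⱼ(θ) = cⱼθ² + dⱼθ + 1, has degree exactly 2n; in particular its leading coefficient is (Σᵢ cᵢ)·(Πⱼ cⱼ) > 0. -/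
open Polynomial Finset

theorem stmt18 (n : ℕ) (hn : 1 ≤ n) (c d : Fin n → ℝ) (hc : ∀ i, 0 < c i)
    (f g : Fin n → Polynomial ℂ)
    (hf : ∀ i, f i = C ((c i : ℂ)^2) * X^2 + C ((c i : ℂ) * ((d i : ℂ) - 2)) * X +
      C ((c i : ℂ) - (d i : ℂ)))
    (hg : ∀ i, g i = C (c i : ℂ) * X^2 + C (d i : ℂ) * X + C 1)
    (F : Polynomial ℂ)
    (hF : F = ∑ i, f i * ∏ j ∈ univ.erase i, g j) :
    F.natDegree = 2*n ∧
      F.leadingCoeff = (((∑ i, c i) * ∏ j, c j : ℝ) : ℂ) ∧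
      0 < (∑ i, c i) * ∏ j, c j := by
  have hcne : ∀ i, (c i : ℂ) ≠ 0 := fun i => by exact_mod_cast (hc i).ne'
  have hfd : ∀ i, (f i).natDegree = 2 := fun i => by
    rw [hf i]; exact natDegree_quadratic (pow_ne_zero 2 (hcne i))
  have hfl : ∀ i, (f i).leadingCoeff = (c i : ℂ)^2 := fun i => by
    rw [hf i]; exact leadingCoeff_quadratic (pow_ne_zero 2 (hcne i))
  have hgd : ∀ i, (g i).natDegree = 2 := fun i => by
    rw [hg i]; exact natDegree_quadratic (hcne i)
  have hgl : ∀ i, (g i).leadingCoeff = (c i : ℂ) := fun i => by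
    rw [hg i]; exact leadingCoeff_quadratic (hcne i)
  have hgne : ∀ i, g i ≠ 0 := fun i => by
    intro h
    have := hgd i
    rw [h] at this
    simp at this
  have hprodd : ∀ i : Fin n, (∏ j ∈ univ.erase i, g j).natDegree = 2*(n-1) := fun i => by
    rw [natDegree_prod _ _ (fun j _ => hgne j)]
    simp only [hgd, Finset.sum_const, smul_eq_mul,
      card_erase_of_mem (mem_univ i), card_univ, Fintype.card_fin]
    ring
  have hprodl : ∀ i : Fin n, (∏ j ∈ univ.erase i, g j).leadingCoeff
      = ∏ j ∈ univ.erase i, (c j : ℂ) := fun i => by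
    rw [leadingCoeff_prod]
    exact Finset.prod_congr rfl fun j _ => hgl j
  have hterm_deg : ∀ i : Fin n, (f i * ∏ j ∈ univ.erase i, g j).natDegree = 2*n := fun i => by
    rw [natDegree_mul (by intro h; have := hfd i; rw [h] at this; simp at this)
      (prod_ne_zero_iff.mpr fun j _ => hgne j), hfd i, hprodd i]
    omega
  have hterm_coeff : ∀ i : Fin n,
      (f i * ∏ j ∈ univ.erase i, g j).coeff (2*n) = (c i : ℂ) * ∏ j, (c j : ℂ) := fun i => by
    have h2n : 2*n = (f i).natDegree + (∏ j ∈ univ.erase i, g j).natDegree := by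
      rw [hfd i, hprodd i]; omega
    rw [h2n, coeff_mul_degree_add_degree, hfl i, hprodl i, sq, mul_assoc,
      Finset.mul_prod_erase univ (fun j => (c j : ℂ)) (mem_univ i)]
  have hFcoeff : F.coeff (2*n) = (((∑ i, c i) * ∏ j, c j : ℝ) : ℂ) := by
    rw [hF, finset_sum_coeff]
    push_cast
    rw [Finset.sum_mul]
    exact Finset.sum_congr rfl fun i _ => hterm_coeff i
  have hpos : 0 < (∑ i, c i) * ∏ j, c j := by
    have : Nonempty (Fin n) := ⟨⟨0, hn⟩⟩
    exact mul_pos (Finset.sum_pos (fun i _ => hc i) univ_nonempty)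
      (Finset.prod_pos fun i _ => hc i)
  have hne : F.coeff (2*n) ≠ 0 := by
    rw [hFcoeff]
    exact_mod_cast hpos.ne'
  have hle : F.natDegree ≤ 2*n := by
    rw [hF]
    exact natDegree_sum_le_of_forall_le _ _ fun i _ => (hterm_deg i).le
  have hdeg : F.natDegree = 2*n := natDegree_eq_of_le_of_coeff_ne_zero hle hne
  exact ⟨hdeg, by rw [leadingCoeff, hdeg, hFcoeff], hpos⟩
end
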